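/- For $m \geq 1$, $r \geq 0$, and $\mathbf{r} = (r_1,\dots,r_m) \in \mathbb{R}_{>0}^m$, define $E^{\mathbf{r}}_\delta = \{(\rho_2,\dots,\rho_m) \in \mathbb{R}_{\geq 0}^{m-1} : \delta \leq \prod_{s=2}^m \rho_s^{r_s} \leq 1,\ \sup_s \rho_s \leq 1\}$. Then $\lim_{\delta \to 0} \delta^{1/r_1}(\ln\delta)^r \int_{E^{\mathbf{r}}_\delta} \prod_{s=2}^m \rho_s^{1 - r_s/r_1}\, d\rho_2 \cdots d\rho_m = 0$. -/

import Mathlib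

open scoped Topology
open Set MeasureTheory

/-!
The estimate \eqref{lemaeq3} from the proof of Lemma A.3 (`lema3`).

For `m ≥ 1` there are `m - 1` variables `ρ_2, …, ρ_m`; we index them by
`Fin k` with `k = m - 1`.  `r1` plays the role of `r_1 > 0` and
`r : Fin k → ℝ` the roles of `r_2, …, r_m > 0`.  The region is
`E^𝐫_δ = {ρ : δ ≤ ∏ ρ_s^{r_s} ≤ 1, 0 ≤ ρ_s ≤ 1}`, and the claim is
`δ^{1/r_1} (ln δ)^rr ∫_{E^𝐫_δ} ∏ ρ_s^{1 - r_s/r_1} dρ → 0` as `δ → 0⁺`.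
-/
theorem radial_region_estimate
    (k : ℕ) (rr : ℕ) (r1 : ℝ) (hr1 : 0 < r1)
    (r : Fin k → ℝ) (hr : ∀ s, 0 < r s) :
    Filter.Tendsto
      (fun δ : ℝ =>
        δ ^ (1 / r1) * (Real.log δ) ^ rr *
          ∫ ρ in {ρ : Fin k → ℝ |
              (∀ s, 0 ≤ ρ s ∧ ρ s ≤ 1) ∧
              δ ≤ ∏ s, (ρ s) ^ (r s) ∧ (∏ s, (ρ s) ^ (r s)) ≤ 1},
            ∏ s, (ρ s) ^ (1 - r s / r1) ∂volume)
      (𝓝[>] (0:ℝ)) (𝓝 0) := by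
  set S : ℝ := ∑ s, r s with hS
  have hS0 : 0 ≤ S := Finset.sum_nonneg fun s _ => (hr s).le
  set ε : ℝ := (2 * (r1 + S))⁻¹ with hεdef
  have hden : 0 < 2 * (r1 + S) := by positivity
  have hεpos : 0 < ε := by positivity
  have hεr : ∀ s, ε * r s ≤ 1 / 2 := by
    intro s
    have h1 : r s ≤ r1 + S := by
      have := Finset.single_le_sum (f := r) (fun i _ => (hr i).le) (Finset.mem_univ s)
      linarith
    calc ε * r s ≤ ε * (r1 + S) := by
          exact mul_le_mul_of_nonneg_left h1 hεpos.le
      _ = 1 / 2 := by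
          rw [hεdef]; field_simp
  have hε1 : ε ≤ 1 / r1 := by
    rw [hεdef, one_div]
    exact inv_anti₀ hr1 (by linarith)
  -- measurability of the region
  have hPm : Measurable fun ρ : Fin k → ℝ => ∏ s, (ρ s) ^ (r s) :=
    Finset.measurable_prod _ fun s _ =>
      (Real.continuous_rpow_const (hr s).le).measurable.comp (measurable_pi_apply s)
  have hEm : ∀ δ : ℝ, MeasurableSet {ρ : Fin k → ℝ |
      (∀ s, 0 ≤ ρ s ∧ ρ s ≤ 1) ∧
      δ ≤ ∏ s, (ρ s) ^ (r s) ∧ (∏ s, (ρ s) ^ (r s)) ≤ 1} := by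
    intro δ
    have h1 : MeasurableSet {ρ : Fin k → ℝ | ∀ s, 0 ≤ ρ s ∧ ρ s ≤ 1} := by
      have : {ρ : Fin k → ℝ | ∀ s, 0 ≤ ρ s ∧ ρ s ≤ 1}
          = Set.pi Set.univ (fun _ => Icc (0:ℝ) 1) := by
        ext ρ; simp [Set.mem_pi, mem_Icc, Pi.le_def, forall_and]
      rw [this]
      exact MeasurableSet.univ_pi fun _ => measurableSet_Icc
    exact h1.inter ((measurableSet_le measurable_const hPm).inter
      (measurableSet_le hPm measurable_const))

  have hg : Filter.Tendsto (fun δ : ℝ => δ ^ ε * |Real.log δ| ^ rr) (𝓝[>] (0:ℝ)) (𝓝 0) := by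
    rcases Nat.eq_zero_or_pos rr with h0 | hpos
    · subst h0
      simp only [pow_zero, mul_one]
      have hc : Filter.Tendsto (fun δ : ℝ => δ ^ ε) (𝓝 (0:ℝ)) (𝓝 ((0:ℝ) ^ ε)) :=
        (Real.continuous_rpow_const hεpos.le).continuousAt
      rw [Real.zero_rpow hεpos.ne'] at hc
      exact hc.mono_left nhdsWithin_le_nhds
    · have hc : (0:ℝ) < ε / rr := by positivity
      have h1 : Filter.Tendsto (fun δ : ℝ => |Real.log δ * δ ^ (ε / rr)|)
          (𝓝[>] (0:ℝ)) (𝓝 0) := by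
        simpa using (tendsto_log_mul_rpow_nhdsGT_zero hc).abs
      have h2 := h1.pow rr
      rw [zero_pow hpos.ne'] at h2
      refine h2.congr' ?_
      filter_upwards [self_mem_nhdsWithin] with δ hδ
      have hδ0 : (0:ℝ) < δ := hδ
      rw [abs_mul, abs_of_nonneg (Real.rpow_nonneg hδ0.le _), mul_pow,
        ← Real.rpow_natCast (δ ^ (ε / rr)) rr, ← Real.rpow_mul hδ0.le,
        div_mul_cancel₀ ε (by exact_mod_cast hpos.ne' : (rr:ℝ) ≠ 0)]
      ring
  refine squeeze_zero_norm' ?_ hg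
  filter_upwards [Ioo_mem_nhdsGT_of_mem (Set.left_mem_Ico.mpr zero_lt_one)] with δ hδ
  obtain ⟨hδ0, hδ1⟩ := hδ
  set E := {ρ : Fin k → ℝ |
      (∀ s, 0 ≤ ρ s ∧ ρ s ≤ 1) ∧
      δ ≤ ∏ s, (ρ s) ^ (r s) ∧ (∏ s, (ρ s) ^ (r s)) ≤ 1} with hEdef
  have hEsub : E ⊆ Set.pi Set.univ (fun _ => Icc (0:ℝ) 1) := by
    intro ρ hρ s _
    exact ⟨(hρ.1 s).1, (hρ.1 s).2⟩
  have hvolE : volume E ≤ 1 := by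
    calc volume E ≤ volume (Set.pi Set.univ fun _ : Fin k => Icc (0:ℝ) 1) :=
          measure_mono hEsub
      _ = 1 := by rw [volume_pi_pi]; simp [Real.volume_Icc]
  have hvolE' : volume E < ⊤ := lt_of_le_of_lt hvolE ENNReal.one_lt_top
  have hbound : ∀ ρ ∈ E, ‖∏ s, (ρ s) ^ (1 - r s / r1)‖ ≤ δ ^ (ε - 1 / r1) := by
    intro ρ hρ
    obtain ⟨hρ01, hδP, hP1⟩ := hρ
    have hρpos : ∀ s, 0 < ρ s := by
      intro t
      rcases lt_or_eq_of_le (hρ01 t).1 with h | h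
      · exact h
      · exfalso
        have hz : (∏ s, (ρ s) ^ (r s)) = 0 :=
          Finset.prod_eq_zero (Finset.mem_univ t)
            (by rw [← h, Real.zero_rpow (hr t).ne'])
        rw [hz] at hδP
        linarith
    have key : (∏ s, (ρ s) ^ (1 - r s / r1))
        = (∏ s, (ρ s) ^ (1 - ε * r s)) * (∏ s, (ρ s) ^ (r s)) ^ (ε - 1 / r1) := by
      rw [← Real.finset_prod_rpow _ _ (fun s _ => Real.rpow_nonneg (hρ01 s).1 _) _,
        ← Finset.prod_mul_distrib]
      refine Finset.prod_congr rfl fun s _ => ?_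
      rw [← Real.rpow_mul (hρ01 s).1, ← Real.rpow_add (hρpos s)]
      ring_nf
    rw [Real.norm_eq_abs,
      abs_of_nonneg (Finset.prod_nonneg fun s _ => Real.rpow_nonneg (hρ01 s).1 _), key]
    have hA : (∏ s, (ρ s) ^ (1 - ε * r s)) ≤ 1 :=
      Finset.prod_le_one (fun s _ => Real.rpow_nonneg (hρ01 s).1 _)
        (fun s _ => Real.rpow_le_one (hρ01 s).1 (hρ01 s).2 (by linarith [hεr s]))
    have hB : (∏ s, (ρ s) ^ (r s)) ^ (ε - 1 / r1) ≤ δ ^ (ε - 1 / r1) :=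
      Real.rpow_le_rpow_of_nonpos hδ0 hδP (by linarith)
    calc (∏ s, (ρ s) ^ (1 - ε * r s)) * (∏ s, (ρ s) ^ (r s)) ^ (ε - 1 / r1)
        ≤ 1 * (δ ^ (ε - 1 / r1)) :=
          mul_le_mul hA hB
            (Real.rpow_nonneg (Finset.prod_nonneg fun s _ =>
              Real.rpow_nonneg (hρ01 s).1 _) _) zero_le_one
      _ = δ ^ (ε - 1 / r1) := one_mul _
  have hI : ‖∫ ρ in E, ∏ s, (ρ s) ^ (1 - r s / r1) ∂volume‖
      ≤ δ ^ (ε - 1 / r1) * (volume E).toReal :=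
    norm_setIntegral_le_of_norm_le_const hvolE' hbound
  have htoReal : (volume E).toReal ≤ 1 := by
    have := ENNReal.toReal_mono ENNReal.one_ne_top hvolE
    simpa using this
  calc ‖δ ^ (1 / r1) * (Real.log δ) ^ rr *
        ∫ ρ in E, ∏ s, (ρ s) ^ (1 - r s / r1) ∂volume‖
      = δ ^ (1 / r1) * |Real.log δ| ^ rr *
        ‖∫ ρ in E, ∏ s, (ρ s) ^ (1 - r s / r1) ∂volume‖ := by
        rw [norm_mul, norm_mul, Real.norm_eq_abs, Real.norm_eq_abs,
          abs_of_nonneg (Real.rpow_nonneg hδ0.le _), abs_pow]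
    _ ≤ δ ^ (1 / r1) * |Real.log δ| ^ rr * (δ ^ (ε - 1 / r1) * 1) := by
        refine mul_le_mul_of_nonneg_left ?_ (by positivity)
        refine le_trans hI ?_
        exact mul_le_mul_of_nonneg_left htoReal (Real.rpow_nonneg hδ0.le _)
    _ = δ ^ ε * |Real.log δ| ^ rr := by
        rw [mul_one]
        rw [show δ ^ (1 / r1) * |Real.log δ| ^ rr * δ ^ (ε - 1 / r1)
          = δ ^ (1 / r1) * δ ^ (ε - 1 / r1) * |Real.log δ| ^ rr from by ring,
          ← Real.rpow_add hδ0]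
        ring_nf
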